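/- Let ψ₀(t) = 8t(t²−1)/(t²+1)³ and θ₀(t) = ∫_{t²}^∞ log(s+1)/(s(s+1)) ds. Then ∫₀^∞ ψ₀θ₀ dt = −1 and ∫₀^∞ ψ₀η₀θ₀ dt = 1/2, where η₀(t) = log(1+t²). -/

import Mathlib

open MeasureTheory Real
open Set Filter Topology

noncomputable def psi0 (t : ℝ) : ℝ := 8 * t * (t ^ 2 - 1) / (t ^ 2 + 1) ^ 3
noncomputable def eta0 (t : ℝ) : ℝ := Real.log (1 + t ^ 2)
noncomputable def theta0 (t : ℝ) : ℝ :=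
  ∫ s in Set.Ioi (t ^ 2), Real.log (s + 1) / (s * (s + 1))

noncomputable def gg (s : ℝ) : ℝ := Real.log (s + 1) / (s * (s + 1))

lemma gg_meas : Measurable gg :=
  (Real.measurable_log.comp (measurable_id.add_const 1)).div
    (measurable_id.mul (measurable_id.add_const 1))

lemma gg_nonneg {s : ℝ} (hs : 0 < s) : 0 ≤ gg s := by
  unfold gg
  apply div_nonneg
  · exact Real.log_nonneg (by linarith)
  · positivity

lemma log_le_two_sqrt {x : ℝ} (hx : 1 ≤ x) : Real.log x ≤ 2 * Real.sqrt x := by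
  have h0 : (0:ℝ) < x := by linarith
  have hs : 0 < Real.sqrt x := Real.sqrt_pos.2 h0
  have := Real.log_le_sub_one_of_pos hs
  rw [Real.log_sqrt h0.le] at this
  linarith

lemma gg_integrableOn : IntegrableOn gg (Set.Ioi (0:ℝ)) := by
  have h1 : IntegrableOn gg (Set.Ioc (0:ℝ) 1) := by
    apply Integrable.mono' (g := fun _ => (1:ℝ))
    · exact integrableOn_const (by simp) (by simp)
    · exact gg_meas.aestronglyMeasurable.restrict
    · refine (ae_restrict_iff' measurableSet_Ioc).2 (Eventually.of_forall fun s hs => ?_)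
      have hs0 : 0 < s := hs.1
      rw [Real.norm_eq_abs, abs_of_nonneg (gg_nonneg hs0)]
      unfold gg
      rw [div_le_one (by positivity)]
      have hlog : Real.log (s+1) ≤ s := by
        have := Real.log_le_sub_one_of_pos (show (0:ℝ) < s+1 by linarith)
        linarith
      nlinarith [hs.2]
  have h2 : IntegrableOn gg (Set.Ioi (1:ℝ)) := by
    apply Integrable.mono' (g := fun s => 4 * s ^ (-(3/2) : ℝ))
    · exact (integrableOn_Ioi_rpow_of_lt (by norm_num) one_pos).const_mul 4
    · exact gg_meas.aestronglyMeasurable.restrict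
    · refine (ae_restrict_iff' measurableSet_Ioi).2 (Eventually.of_forall fun s hs => ?_)
      have hs1 : (1:ℝ) < s := hs
      have hs0 : (0:ℝ) < s := by linarith
      rw [Real.norm_eq_abs, abs_of_nonneg (gg_nonneg hs0)]
      have h4 : Real.sqrt 4 = 2 := by
        rw [show (4:ℝ) = 2^2 by norm_num, Real.sqrt_sq (by norm_num : (0:ℝ) ≤ 2)]
      have hsq : Real.sqrt (s+1) ≤ 2 * Real.sqrt s := by
        calc Real.sqrt (s+1) ≤ Real.sqrt (4*s) := Real.sqrt_le_sqrt (by linarith)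
        _ = 2 * Real.sqrt s := by rw [Real.sqrt_mul (by norm_num) s, h4]
      have hb : Real.log (s+1) ≤ 4 * Real.sqrt s := by
        have := log_le_two_sqrt (show (1:ℝ) ≤ s+1 by linarith)
        linarith
      have key : s ^ (-(3/2):ℝ) = Real.sqrt s / s^2 := by
        rw [Real.sqrt_eq_rpow, show (-(3/2):ℝ) = 1/2 - 2 by norm_num, Real.rpow_sub hs0,
          show ((2:ℝ)) = ((2:ℕ):ℝ) by norm_num, Real.rpow_natCast]
      calc gg s = Real.log (s+1) / (s*(s+1)) := rfl
      _ ≤ (4 * Real.sqrt s) / (s*s) := by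
          apply div_le_div₀ (by positivity) hb (by positivity) (by nlinarith)
      _ = 4 * (Real.sqrt s / s^2) := by ring
      _ = 4 * s ^ (-(3/2):ℝ) := by rw [key]
  have := h1.union h2
  rwa [Set.Ioc_union_Ioi_eq_Ioi zero_le_one] at this

noncomputable def G : ℝ → ℝ := (Set.Ioi (0:ℝ)).indicator gg

lemma G_integrable : Integrable G :=
  (integrable_indicator_iff measurableSet_Ioi).2 gg_integrableOn

lemma G_nonneg (s : ℝ) : 0 ≤ G s := by
  unfold G
  by_cases h : s ∈ Set.Ioi (0:ℝ)
  · rw [Set.indicator_of_mem h]; exact gg_nonneg h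
  · rw [Set.indicator_of_notMem h]

noncomputable def Mc : ℝ := ∫ s in Set.Ioi (0:ℝ), gg s

noncomputable def Th (x : ℝ) : ℝ := ∫ s in (0:ℝ)..x, G s

lemma Mc_nonneg : 0 ≤ Mc :=
  setIntegral_nonneg measurableSet_Ioi fun s hs => gg_nonneg hs

lemma integral_G_Ioi (a : ℝ) (ha : 0 ≤ a) :
    ∫ s in Set.Ioi a, G s = ∫ s in Set.Ioi a, gg s :=
  setIntegral_congr_fun measurableSet_Ioi fun x hx =>
    Set.indicator_of_mem (lt_of_le_of_lt ha hx) gg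

lemma theta0_eq (t : ℝ) : theta0 t = Mc - Th (t^2) := by
  have h2 : Th (t^2) = ∫ s in Set.Ioc 0 (t^2), G s :=
    intervalIntegral.integral_of_le (sq_nonneg t)
  have h3 : (∫ s in Set.Ioc 0 (t^2), G s) + ∫ s in Set.Ioi (t^2), G s
      = ∫ s in Set.Ioi (0:ℝ), G s := by
    rw [← setIntegral_union (Set.Ioc_disjoint_Ioi le_rfl) measurableSet_Ioi
      G_integrable.integrableOn G_integrable.integrableOn,
      Set.Ioc_union_Ioi_eq_Ioi (sq_nonneg t)]
  have h4 : theta0 t = ∫ s in Set.Ioi (t^2), G s := by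
    rw [integral_G_Ioi _ (sq_nonneg t)]; rfl
  have h5 := integral_G_Ioi 0 le_rfl
  unfold Mc
  rw [h4, h2, ← h5]
  linarith

lemma Th_continuous : Continuous Th := G_integrable.continuous_primitive 0

lemma theta0_continuous : Continuous theta0 := by
  have : theta0 = fun t => Mc - Th (t^2) := funext theta0_eq
  rw [this]
  exact continuous_const.sub (Th_continuous.comp (continuous_pow 2))

lemma Th_nonneg {x : ℝ} (h : 0 ≤ x) : 0 ≤ Th x := by
  rw [Th, intervalIntegral.integral_of_le h]
  exact setIntegral_nonneg measurableSet_Ioc fun s _ => G_nonneg s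

lemma theta0_nonneg (t : ℝ) : 0 ≤ theta0 t :=
  setIntegral_nonneg measurableSet_Ioi fun s hs =>
    gg_nonneg (lt_of_le_of_lt (sq_nonneg t) hs)

lemma theta0_le (t : ℝ) : theta0 t ≤ Mc := by
  rw [theta0_eq]
  have := Th_nonneg (sq_nonneg t)
  linarith

lemma theta0_tendsto : Tendsto theta0 atTop (𝓝 0) := by
  have hsq : Tendsto (fun t : ℝ => t^2) atTop atTop := tendsto_pow_atTop two_ne_zero
  have h := intervalIntegral_tendsto_integral_Ioi 0 G_integrable.integrableOn hsq
  rw [integral_G_Ioi 0 le_rfl] at h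
  have h2 : Tendsto (fun t : ℝ => Mc - Th (t^2)) atTop (𝓝 (Mc - Mc)) :=
    tendsto_const_nhds.sub h
  rw [sub_self] at h2
  exact h2.congr fun t => (theta0_eq t).symm

lemma theta0_hasDeriv {t : ℝ} (ht : 0 < t) :
    HasDerivAt theta0 (-(Real.log (t^2+1) / (t^2*(t^2+1)) * (2*t))) t := by
  have hx : (0:ℝ) < t^2 := by positivity
  have hgg_cont : ContinuousAt gg (t^2) := by
    apply ContinuousAt.div
    · exact (Real.continuousAt_log (by positivity)).comp
        (continuousAt_id.add continuousAt_const)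
    · exact continuousAt_id.mul (continuousAt_id.add continuousAt_const)
    · positivity
  have hEq : G =ᶠ[𝓝 (t^2)] gg :=
    eventuallyEq_of_mem (Ioi_mem_nhds hx) fun x hx' => Set.indicator_of_mem hx' gg
  have hG_cont : ContinuousAt G (t^2) := hgg_cont.congr hEq.symm
  have hTh : HasDerivAt Th (G (t^2)) (t^2) :=
    intervalIntegral.integral_hasDerivAt_right G_integrable.intervalIntegrable
      (G_integrable.aestronglyMeasurable.stronglyMeasurableAtFilter)
      hG_cont
  have hGval : G (t^2) = Real.log (t^2+1) / (t^2*(t^2+1)) :=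
    Set.indicator_of_mem hx gg
  have hpow : HasDerivAt (fun t : ℝ => t^2) (2*t) t := by
    simpa using hasDerivAt_pow 2 t
  have hcomp : HasDerivAt (fun t : ℝ => Th (t^2))
      (Real.log (t^2+1) / (t^2*(t^2+1)) * (2*t)) t := by
    have h2 : HasDerivAt (Th ∘ fun t : ℝ => t^2) (G (t^2) * (2*t)) t :=
      HasDerivAt.comp t hTh hpow
    rw [hGval] at h2
    exact h2
  have : HasDerivAt (fun t : ℝ => Mc - Th (t^2))
      (-(Real.log (t^2+1) / (t^2*(t^2+1)) * (2*t))) t := hcomp.const_sub Mc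
  exact this.congr_of_eventuallyEq (Eventually.of_forall fun x => theta0_eq x)

lemma psi0_abs_le {t : ℝ} (ht : 0 ≤ t) : |psi0 t| ≤ 8 * t / (t^2+1)^2 := by
  unfold psi0
  rw [abs_div, abs_of_nonneg (by positivity : (0:ℝ) ≤ (t^2+1)^3),
    div_le_div_iff₀ (by positivity) (by positivity)]
  have h1 : |8 * t * (t^2-1)| ≤ 8 * t * (t^2+1) := by
    rw [abs_mul, abs_of_nonneg (by positivity : (0:ℝ) ≤ 8*t)]
    have : |t^2-1| ≤ t^2+1 := by
      rw [abs_le]; constructor <;> nlinarith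
    nlinarith
  nlinarith [abs_nonneg (8*t*(t^2-1)), sq_nonneg t]

lemma psi0_theta0_bound {t : ℝ} (ht : 0 < t) :
    ‖psi0 t * theta0 t‖ ≤ (4 * Mc) * (1 + t^2)⁻¹ := by
  rw [Real.norm_eq_abs, abs_mul, abs_of_nonneg (theta0_nonneg t)]
  have h1 : |psi0 t| ≤ 4 * (1+t^2)⁻¹ := by
    have := psi0_abs_le ht.le
    have h2 : 8 * t / (t^2+1)^2 ≤ 4 * (1+t^2)⁻¹ := by
      rw [div_le_iff₀ (by positivity)]
      have : (1+t^2)⁻¹ * (1+t^2) = 1 := by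
        field_simp
      nlinarith [sq_nonneg (t-1), inv_nonneg.2 (by positivity : (0:ℝ) ≤ 1+t^2)]
    linarith
  calc |psi0 t| * theta0 t ≤ (4 * (1+t^2)⁻¹) * Mc := by
        apply mul_le_mul h1 (theta0_le t) (theta0_nonneg t) (by positivity)
  _ = (4 * Mc) * (1+t^2)⁻¹ := by ring

lemma eta0_nonneg (t : ℝ) : 0 ≤ eta0 t := Real.log_nonneg (by nlinarith [sq_nonneg t])

lemma eta0_le {t : ℝ} : eta0 t ≤ 2 * Real.sqrt (1+t^2) :=
  log_le_two_sqrt (by nlinarith [sq_nonneg t])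

lemma psi0_eta0_theta0_bound {t : ℝ} (ht : 0 < t) :
    ‖psi0 t * eta0 t * theta0 t‖ ≤ (16 * Mc) * (1 + t^2)⁻¹ := by
  rw [Real.norm_eq_abs, abs_mul, abs_mul, abs_of_nonneg (theta0_nonneg t),
    abs_of_nonneg (eta0_nonneg t)]
  set r := Real.sqrt (1+t^2) with hr
  have hr2 : r^2 = 1+t^2 := Real.sq_sqrt (by positivity)
  have hrpos : 0 < r := Real.sqrt_pos.2 (by positivity)
  have htr : t ≤ r := by
    nlinarith [sq_nonneg (t - r)]
  have h1 : |psi0 t| * eta0 t ≤ (8 * t / (t^2+1)^2) * (2*r) :=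
    mul_le_mul (psi0_abs_le ht.le) eta0_le (eta0_nonneg t) (by positivity)
  have h2 : (8 * t / (t^2+1)^2) * (2*r) ≤ 16 * (1+t^2)⁻¹ := by
    rw [div_mul_eq_mul_div, div_le_iff₀ (by positivity)]
    have hinv : (1+t^2)⁻¹ * (1+t^2) = 1 := by field_simp
    have key : t * r ≤ 1 + t^2 := by nlinarith
    have hexp : (t^2+1)^2 = (1+t^2) * (1+t^2) := by ring
    nlinarith [inv_nonneg.2 (by positivity : (0:ℝ) ≤ 1+t^2), hrpos.le, ht.le]
  calc |psi0 t| * eta0 t * theta0 t ≤ (16 * (1+t^2)⁻¹) * Mc := by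
        apply mul_le_mul (le_trans h1 h2) (theta0_le t) (theta0_nonneg t) (by positivity)
  _ = (16 * Mc) * (1+t^2)⁻¹ := by ring

lemma psi0_continuous : Continuous psi0 := by
  apply Continuous.div
  · continuity
  · continuity
  · intro t; positivity

lemma eta0_continuous : Continuous eta0 := by
  apply Continuous.log
  · continuity
  · intro t; positivity

lemma int1 : IntegrableOn (fun t => psi0 t * theta0 t) (Set.Ioi (0:ℝ)) := by
  apply Integrable.mono' (g := fun t => (4*Mc) * (1+t^2)⁻¹)
    ((integrable_inv_one_add_sq.const_mul (4*Mc)).integrableOn)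
  · exact (psi0_continuous.mul theta0_continuous).aestronglyMeasurable.restrict
  · exact (ae_restrict_iff' measurableSet_Ioi).2
      (Eventually.of_forall fun t ht => psi0_theta0_bound ht)

lemma int2 : IntegrableOn (fun t => psi0 t * eta0 t * theta0 t) (Set.Ioi (0:ℝ)) := by
  apply Integrable.mono' (g := fun t => (16*Mc) * (1+t^2)⁻¹)
    ((integrable_inv_one_add_sq.const_mul (16*Mc)).integrableOn)
  · exact ((psi0_continuous.mul eta0_continuous).mul
      theta0_continuous).aestronglyMeasurable.restrict
  · exact (ae_restrict_iff' measurableSet_Ioi).2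
      (Eventually.of_forall fun t ht => psi0_eta0_theta0_bound ht)

noncomputable def F1 (t : ℝ) : ℝ :=
  (-4) * t^2 / (t^2+1)^2 * theta0 t + (2*Real.log (t^2+1) + 1) / (t^2+1)^2

lemma F1_deriv {t : ℝ} (ht : 0 < t) : HasDerivAt F1 (psi0 t * theta0 t) t := by
  have hune : (t^2+1) ≠ 0 := by positivity
  have hu2ne : ((t^2+1)^2) ≠ 0 := by positivity
  have hpow : HasDerivAt (fun t : ℝ => t^2) (2*t) t := by simpa using hasDerivAt_pow 2 t
  have hu : HasDerivAt (fun t : ℝ => t^2+1) (2*t) t := hpow.add_const 1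
  have hu2 : HasDerivAt (fun t : ℝ => (t^2+1)^2) (2*(t^2+1)*(2*t)) t := by
    refine (hu.fun_pow 2).congr_deriv (Eq.symm ?_)
    push_cast
    ring
  have hL : HasDerivAt (fun t : ℝ => Real.log (t^2+1)) (2*t/(t^2+1)) t := hu.log hune
  have hθ := theta0_hasDeriv ht
  have hA : HasDerivAt (fun t : ℝ => (-4) * t^2 / (t^2+1)^2) (psi0 t) t := by
    have h := (hpow.const_mul (-4)).fun_div hu2 hu2ne
    refine h.congr_deriv (Eq.symm ?_)
    unfold psi0
    field_simp
    ring
  have hB : HasDerivAt (fun t : ℝ => (2*Real.log (t^2+1) + 1) / (t^2+1)^2)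
      (-(8*t*Real.log (t^2+1)) / (t^2+1)^3) t := by
    have h := ((hL.const_mul 2).add_const 1).fun_div hu2 hu2ne
    refine h.congr_deriv (Eq.symm ?_)
    field_simp
    ring
  have H := (hA.fun_mul hθ).fun_add hB
  refine H.congr_deriv (Eq.symm ?_)
  have hθterm : (-4) * t^2 / (t^2+1)^2 * (-(Real.log (t^2+1) / (t^2*(t^2+1)) * (2*t)))
      + (-(8*t*Real.log (t^2+1)) / (t^2+1)^3) = 0 := by
    field_simp
    ring
  linarith [hθterm]

noncomputable def F2 (t : ℝ) : ℝ :=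
  ((4 - 4*(t^2+1))*Real.log (t^2+1) - 4*(t^2+1) + 2 + 2*(t^2+1)^2) / (t^2+1)^2 * theta0 t
  + (2*(Real.log (t^2+1))^2 + 3*Real.log (t^2+1) + 3/2
      - (2*Real.log (t^2+1)+2)*(t^2+1)) / (t^2+1)^2

lemma F2_deriv {t : ℝ} (ht : 0 < t) : HasDerivAt F2 (psi0 t * eta0 t * theta0 t) t := by
  have hune : (t^2+1) ≠ 0 := by positivity
  have hu2ne : ((t^2+1)^2) ≠ 0 := by positivity
  have hpow : HasDerivAt (fun t : ℝ => t^2) (2*t) t := by simpa using hasDerivAt_pow 2 t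
  have hu : HasDerivAt (fun t : ℝ => t^2+1) (2*t) t := hpow.add_const 1
  have hu2 : HasDerivAt (fun t : ℝ => (t^2+1)^2) (2*(t^2+1)*(2*t)) t := by
    refine (hu.fun_pow 2).congr_deriv (Eq.symm ?_)
    push_cast
    ring
  have hL : HasDerivAt (fun t : ℝ => Real.log (t^2+1)) (2*t/(t^2+1)) t := hu.log hune
  have hL2 : HasDerivAt (fun t : ℝ => (Real.log (t^2+1))^2)
      (2*(Real.log (t^2+1))*(2*t/(t^2+1))) t := by
    refine (hL.fun_pow 2).congr_deriv (Eq.symm ?_)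
    push_cast
    ring
  have hθ := theta0_hasDeriv ht
  have hA : HasDerivAt
      (fun t : ℝ => ((4 - 4*(t^2+1))*Real.log (t^2+1) - 4*(t^2+1) + 2 + 2*(t^2+1)^2) / (t^2+1)^2)
      (psi0 t * eta0 t) t := by
    have hnum : HasDerivAt
        (fun t : ℝ => (4 - 4*(t^2+1))*Real.log (t^2+1) - 4*(t^2+1) + 2 + 2*(t^2+1)^2)
        (((-(4*(2*t)))*Real.log (t^2+1) + (4 - 4*(t^2+1))*(2*t/(t^2+1))) - 4*(2*t)
          + 2*(2*(t^2+1)*(2*t))) t := by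
      exact ((((hu.const_mul 4).const_sub 4).mul hL).sub (hu.const_mul 4)
        |>.add_const 2 |>.add (hu2.const_mul 2))
    have h := hnum.fun_div hu2 hu2ne
    refine h.congr_deriv (Eq.symm ?_)
    unfold psi0 eta0
    rw [show (1:ℝ)+t^2 = t^2+1 by ring]
    field_simp
    ring
  have hB : HasDerivAt
      (fun t : ℝ => (2*(Real.log (t^2+1))^2 + 3*Real.log (t^2+1) + 3/2
        - (2*Real.log (t^2+1)+2)*(t^2+1)) / (t^2+1)^2)
      ((-8)*t*(Real.log (t^2+1))^2/(t^2+1)^3 + 4*t^3*Real.log (t^2+1)/(t^2+1)^3) t := by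
    have hnum : HasDerivAt
        (fun t : ℝ => 2*(Real.log (t^2+1))^2 + 3*Real.log (t^2+1) + 3/2
          - (2*Real.log (t^2+1)+2)*(t^2+1))
        ((2*(2*(Real.log (t^2+1))*(2*t/(t^2+1))) + 3*(2*t/(t^2+1)))
          - ((2*(2*t/(t^2+1)))*(t^2+1) + (2*Real.log (t^2+1)+2)*(2*t))) t := by
      exact (((hL2.const_mul 2).add (hL.const_mul 3)).add_const (3/2)).sub
        (((hL.const_mul 2).add_const 2).mul hu)
    have h := hnum.fun_div hu2 hu2ne
    refine h.congr_deriv (Eq.symm ?_)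
    field_simp
    ring
  have H := (hA.fun_mul hθ).fun_add hB
  refine H.congr_deriv (Eq.symm ?_)
  have hθterm : ((4 - 4*(t^2+1))*Real.log (t^2+1) - 4*(t^2+1) + 2 + 2*(t^2+1)^2) / (t^2+1)^2
        * (-(Real.log (t^2+1) / (t^2*(t^2+1)) * (2*t)))
      + ((-8)*t*(Real.log (t^2+1))^2/(t^2+1)^3 + 4*t^3*Real.log (t^2+1)/(t^2+1)^3) = 0 := by
    field_simp
    ring
  linarith [hθterm]

lemma hune_all (t : ℝ) : (t^2+1) ≠ 0 := by positivity

lemma hu_top : Tendsto (fun t : ℝ => t^2+1) atTop atTop :=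
  tendsto_atTop_add_const_right _ 1 (tendsto_pow_atTop two_ne_zero)

lemma hlog_div : Tendsto (fun t : ℝ => Real.log (t^2+1) / (t^2+1)) atTop (𝓝 0) := by
  have h := (Real.tendsto_pow_log_div_mul_add_atTop 1 0 1 one_ne_zero).comp hu_top
  simp only [Function.comp, pow_one, one_mul, add_zero] at h
  exact h

lemma hlog2_div : Tendsto (fun t : ℝ => (Real.log (t^2+1))^2 / (t^2+1)) atTop (𝓝 0) := by
  have h := (Real.tendsto_pow_log_div_mul_add_atTop 1 0 2 one_ne_zero).comp hu_top
  simp only [Function.comp, one_mul, add_zero] at h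
  exact h

lemma hinv_t : Tendsto (fun t : ℝ => (t^2+1)⁻¹) atTop (𝓝 0) :=
  tendsto_inv_atTop_zero.comp hu_top

lemma F1_tendsto : Tendsto F1 atTop (𝓝 0) := by
  have hA : Tendsto (fun t : ℝ => (-4) * t^2 / (t^2+1)^2) atTop (𝓝 0) := by
    have h := (hinv_t.const_mul (-4)).add ((hinv_t.mul hinv_t).const_mul 4)
    norm_num at h
    refine h.congr fun t => ?_
    have := hune_all t
    field_simp
    ring
  have hAθ : Tendsto (fun t : ℝ => (-4) * t^2 / (t^2+1)^2 * theta0 t) atTop (𝓝 0) := by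
    have h := hA.mul theta0_tendsto
    rw [mul_zero] at h
    exact h
  have hB : Tendsto (fun t : ℝ => (2*Real.log (t^2+1) + 1) / (t^2+1)^2) atTop (𝓝 0) := by
    have h := ((hlog_div.mul hinv_t).const_mul 2).add (hinv_t.mul hinv_t)
    rw [show ((2:ℝ)*(0*0) + 0*0) = 0 by norm_num] at h
    refine h.congr fun t => ?_
    have := hune_all t
    field_simp
  have h := hAθ.add hB
  rw [add_zero] at h
  exact h

lemma F2_tendsto : Tendsto F2 atTop (𝓝 0) := by
  have hA : Tendsto
      (fun t : ℝ => ((4 - 4*(t^2+1))*Real.log (t^2+1) - 4*(t^2+1) + 2 + 2*(t^2+1)^2) / (t^2+1)^2)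
      atTop (𝓝 2) := by
    have h : Tendsto (fun t : ℝ => 4*(Real.log (t^2+1)/(t^2+1))*((t^2+1)⁻¹)
        - 4*(Real.log (t^2+1)/(t^2+1)) - 4*((t^2+1)⁻¹) + 2*((t^2+1)⁻¹*(t^2+1)⁻¹) + 2)
        atTop (𝓝 (4*0*0 - 4*0 - 4*0 + 2*(0*0) + 2)) := by
      exact ((((((hlog_div.const_mul 4).mul hinv_t)).sub (hlog_div.const_mul 4)).sub
        (hinv_t.const_mul 4)).add ((hinv_t.mul hinv_t).const_mul 2)).add_const 2
    norm_num at h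
    refine h.congr fun t => ?_
    have := hune_all t
    field_simp
  have hAθ := hA.mul theta0_tendsto
  norm_num at hAθ
  have hB : Tendsto
      (fun t : ℝ => (2*(Real.log (t^2+1))^2 + 3*Real.log (t^2+1) + 3/2
        - (2*Real.log (t^2+1)+2)*(t^2+1)) / (t^2+1)^2) atTop (𝓝 0) := by
    have h : Tendsto (fun t : ℝ => 2*((Real.log (t^2+1))^2/(t^2+1))*((t^2+1)⁻¹)
        + 3*(Real.log (t^2+1)/(t^2+1))*((t^2+1)⁻¹) + (3/2)*((t^2+1)⁻¹*(t^2+1)⁻¹)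
        - 2*(Real.log (t^2+1)/(t^2+1)) - 2*((t^2+1)⁻¹))
        atTop (𝓝 (2*0*0 + 3*0*0 + (3/2)*(0*0) - 2*0 - 2*0)) := by
      exact (((((hlog2_div.const_mul 2).mul hinv_t).add
        (((hlog_div.const_mul 3).mul hinv_t))).add
        ((hinv_t.mul hinv_t).const_mul (3/2))).sub (hlog_div.const_mul 2)).sub
        (hinv_t.const_mul 2)
    norm_num at h
    refine h.congr fun t => ?_
    have := hune_all t
    field_simp
    ring
  have := hAθ.add hB
  norm_num at this
  exact this

lemma F1_zero : F1 0 = 1 := by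
  unfold F1
  norm_num

lemma F2_zero : F2 0 = -(1/2) := by
  unfold F2
  norm_num

lemma F1_continuousWithinAt : ContinuousWithinAt F1 (Set.Ici (0:ℝ)) 0 := by
  apply Continuous.continuousWithinAt
  unfold F1
  have h1 : Continuous fun t : ℝ => (t^2+1)^2 := by continuity
  have h2 : ∀ t : ℝ, (t^2+1)^2 ≠ 0 := fun t => by positivity
  have hlog : Continuous fun t : ℝ => Real.log (t^2+1) :=
    Continuous.log (by continuity) (hune_all)
  exact ((Continuous.div (by continuity) h1 h2).mul theta0_continuous).add
    (Continuous.div (by continuity) h1 h2)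

lemma F2_continuousWithinAt : ContinuousWithinAt F2 (Set.Ici (0:ℝ)) 0 := by
  apply Continuous.continuousWithinAt
  unfold F2
  have h1 : Continuous fun t : ℝ => (t^2+1)^2 := by continuity
  have h2 : ∀ t : ℝ, (t^2+1)^2 ≠ 0 := fun t => by positivity
  have hlog : Continuous fun t : ℝ => Real.log (t^2+1) :=
    Continuous.log (by continuity) (hune_all)
  apply Continuous.add
  · exact (Continuous.div (by continuity) h1 h2).mul theta0_continuous
  · exact Continuous.div (by continuity) h1 h2

theorem stmt10 :
    (∫ t in Set.Ioi (0 : ℝ), psi0 t * theta0 t) = -1 ∧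
    (∫ t in Set.Ioi (0 : ℝ), psi0 t * eta0 t * theta0 t) = 1 / 2 := by
  constructor
  · have h := integral_Ioi_of_hasDerivAt_of_tendsto F1_continuousWithinAt
      (fun x hx => F1_deriv hx) int1 F1_tendsto
    rw [h, F1_zero]
    norm_num
  · have h := integral_Ioi_of_hasDerivAt_of_tendsto F2_continuousWithinAt
      (fun x hx => F2_deriv hx) int2 F2_tendsto
    rw [h, F2_zero]
    norm_num
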